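/- For every 2-CNF theory S with At(S) ≠ ∅ there exists a cover 𝒜 for S, each of whose members is a nonempty consistent set of literals over At(S), such that ∑_{A ∈ 𝒜} 3^(−|At(A)|/3) ≤ 1, where At(A) denotes the set of atoms occurring in the literals of A. -/
import Mathlib


open Classical

/-- A literal: `(true, a)` is the atom `a`, `(false, a)` is the negated atom `¬ a`. -/
abbrev Lit : Type := Bool × ℕ

/-- A clause: a finite set of literals, viewed as the disjunction of its literals. -/
abbrev Clause : Type := Finset Lit

/-- A CNF theory: a finite set of clauses. -/
abbrev CTheory : Type := Finset Clause

/-- A clause is proper: it contains no atom together with its negation. -/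
def Clause.ok (c : Clause) : Prop :=
  ∀ a : ℕ, ¬ (((true, a) : Lit) ∈ c ∧ ((false, a) : Lit) ∈ c)

/-- The set of atoms occurring in a clause. -/
def clauseAtoms (c : Clause) : Finset ℕ := c.image Prod.snd

/-- `At(T)`: the set of atoms occurring in a CNF theory. -/
def thAtoms (T : CTheory) : Finset ℕ := T.sup clauseAtoms

/-- A set of atoms `M` satisfies a literal `l`. -/
def satLit (M : Finset ℕ) (l : Lit) : Prop := if l.1 then l.2 ∈ M else l.2 ∉ M

/-- `M` is a model of the CNF theory `T`. -/
def isModel (M : Finset ℕ) (T : CTheory) : Prop := ∀ c ∈ T, ∃ l ∈ c, satLit M l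

/-- `M` is a minimal model of `T`: a model `M ⊆ At(T)` no proper subset of which is a model. -/
def isMinModel (M : Finset ℕ) (T : CTheory) : Prop :=
  isModel M T ∧ M ⊆ thAtoms T ∧ ∀ M' : Finset ℕ, M' ⊂ M → ¬ isModel M' T

/-- The dual of a literal. -/
def litNeg (l : Lit) : Lit := (!l.1, l.2)

/-- `L̄`: the set of duals of the literals of `L`. -/
def negSet (L : Finset Lit) : Finset Lit := L.image litNeg

/-- `L⁺`: the set of atoms belonging to `L`. -/
def posAtoms (L : Finset Lit) : Finset ℕ := (L.filter (fun l => l.1 = true)).image Prod.snd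

/-- `L⁻`: the set of atoms whose negation belongs to `L`. -/
def negAtoms (L : Finset Lit) : Finset ℕ := (L.filter (fun l => l.1 = false)).image Prod.snd

/-- A set of atoms `M` is consistent with a set of literals `L` if `L⁺ ⊆ M` and `L⁻ ∩ M = ∅`. -/
def consistentWith (M : Finset ℕ) (L : Finset Lit) : Prop :=
  posAtoms L ⊆ M ∧ ∀ a ∈ negAtoms L, a ∉ M

/-- `Lit(T)`: the set of all literals over the atoms of `T`. -/
def litsOf (T : CTheory) : Finset Lit :=
  (thAtoms T).image (fun a => ((true, a) : Lit)) ∪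
    (thAtoms T).image (fun a => ((false, a) : Lit))

/-- `T_L = {c \ L̄ : c ∈ T, c ∩ L = ∅}`. -/
def reduceTh (T : CTheory) (L : Finset Lit) : CTheory :=
  (T.filter (fun c => ∀ l ∈ c, l ∉ L)).image (fun c => c \ negSet L)

/-! ### Basic helper lemmas -/

lemma mem_posAtoms {A : Finset Lit} {a : ℕ} : a ∈ posAtoms A ↔ ((true, a) : Lit) ∈ A := by
  constructor
  · intro h
    simp only [posAtoms, Finset.mem_image, Finset.mem_filter] at h
    obtain ⟨⟨b, x⟩, ⟨hmem, hb⟩, rfl⟩ := h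
    simp only at hb
    subst hb
    exact hmem
  · intro h
    simp only [posAtoms, Finset.mem_image, Finset.mem_filter]
    exact ⟨(true, a), ⟨h, rfl⟩, rfl⟩

lemma mem_negAtoms {A : Finset Lit} {a : ℕ} : a ∈ negAtoms A ↔ ((false, a) : Lit) ∈ A := by
  constructor
  · intro h
    simp only [negAtoms, Finset.mem_image, Finset.mem_filter] at h
    obtain ⟨⟨b, x⟩, ⟨hmem, hb⟩, rfl⟩ := h
    simp only at hb
    subst hb
    exact hmem
  · intro h
    simp only [negAtoms, Finset.mem_image, Finset.mem_filter]
    exact ⟨(false, a), ⟨h, rfl⟩, rfl⟩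

lemma consistentWith_iff {M : Finset ℕ} {A : Finset Lit} :
    consistentWith M A ↔ ∀ l ∈ A, satLit M l := by
  constructor
  · rintro ⟨hpos, hneg⟩ ⟨b, x⟩ hl
    cases b
    · have : x ∈ negAtoms A := mem_negAtoms.2 hl
      simpa [satLit] using hneg x this
    · have : x ∈ M := hpos (mem_posAtoms.2 hl)
      simpa [satLit] using this
  · intro h
    refine ⟨fun x hx => ?_, fun x hx => ?_⟩
    · have := h _ (mem_posAtoms.1 hx); simpa [satLit] using this
    · have := h _ (mem_negAtoms.1 hx); simpa [satLit] using this

lemma consistentWith_union {M : Finset ℕ} {A B : Finset Lit} :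
    consistentWith M (A ∪ B) ↔ consistentWith M A ∧ consistentWith M B := by
  simp only [consistentWith_iff, Finset.mem_union]
  constructor
  · intro h; exact ⟨fun l hl => h l (Or.inl hl), fun l hl => h l (Or.inr hl)⟩
  · rintro ⟨h1, h2⟩ l hl; rcases hl with hl | hl
    · exact h1 l hl
    · exact h2 l hl

lemma satLit_litNeg_false {M : Finset ℕ} {l : Lit} (h1 : satLit M l) (h2 : satLit M (litNeg l)) :
    False := by
  obtain ⟨b, x⟩ := l
  cases b <;> simp [satLit, litNeg] at h1 h2 <;> first | exact h2 h1 | exact h1 h2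

lemma satLit_erase_iff {M : Finset ℕ} {a : ℕ} {l : Lit} (h : l.2 ≠ a) :
    satLit (M.erase a) l ↔ satLit M l := by
  obtain ⟨b, x⟩ := l
  simp only at h
  cases b <;> simp [satLit, Finset.mem_erase, h]

lemma mem_thAtoms_of_mem {S : CTheory} {c : Clause} {l : Lit} (hl : l ∈ c) (hc : c ∈ S) :
    l.2 ∈ thAtoms S := by
  have : l.2 ∈ clauseAtoms c := Finset.mem_image_of_mem Prod.snd hl
  exact Finset.mem_sup.2 ⟨c, hc, this⟩

lemma mem_litsOf_iff {S : CTheory} {l : Lit} : l ∈ litsOf S ↔ l.2 ∈ thAtoms S := by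
  obtain ⟨b, x⟩ := l
  cases b <;> simp [litsOf, Finset.mem_union, Finset.mem_image]

/-- `L` contains no complementary pair. -/
def lcons (A : Finset Lit) : Prop :=
  ∀ a : ℕ, ¬ (((true, a) : Lit) ∈ A ∧ ((false, a) : Lit) ∈ A)

lemma lcons_disjoint {A : Finset Lit} (h : lcons A) :
    Disjoint (posAtoms A) (negAtoms A) := by
  rw [Finset.disjoint_left]
  intro x hx hx'
  exact h x ⟨mem_posAtoms.1 hx, mem_negAtoms.1 hx'⟩

lemma lcons_union {A B : Finset Lit} (hA : lcons A) (hB : lcons B)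
    (hdisj : ∀ x ∈ B.image Prod.snd, x ∉ A.image Prod.snd) : lcons (A ∪ B) := by
  intro a ⟨h1, h2⟩
  rcases Finset.mem_union.1 h1 with h1 | h1 <;> rcases Finset.mem_union.1 h2 with h2 | h2
  · exact hA a ⟨h1, h2⟩
  · exact hdisj a (Finset.mem_image_of_mem Prod.snd h2) (Finset.mem_image_of_mem Prod.snd h1)
  · exact hdisj a (Finset.mem_image_of_mem Prod.snd h1) (Finset.mem_image_of_mem Prod.snd h2)
  · exact hB a ⟨h1, h2⟩

lemma mem_atoms_assigned {L : Finset Lit} {x : ℕ} (h : x ∈ L.image Prod.snd) :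
    ((true, x) : Lit) ∈ L ∨ ((false, x) : Lit) ∈ L := by
  obtain ⟨⟨b, y⟩, hmem, rfl⟩ := Finset.mem_image.1 h
  cases b
  · exact Or.inr hmem
  · exact Or.inl hmem

/-! ### Numeric lemmas -/

noncomputable def MMw (A : Finset Lit) : ℝ := (3 : ℝ) ^ (-(((A.image Prod.snd).card : ℝ)) / 3)

lemma MMw_nonneg (A : Finset Lit) : 0 ≤ MMw A := Real.rpow_nonneg (by norm_num) _

lemma MMw_le {k : ℕ} {A : Finset Lit} (h : k ≤ (A.image Prod.snd).card) :
    MMw A ≤ (3:ℝ) ^ (-(k:ℝ)/3) := by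
  apply Real.rpow_le_rpow_of_exponent_le (by norm_num)
  have : (k:ℝ) ≤ ((A.image Prod.snd).card : ℝ) := by exact_mod_cast h
  linarith

lemma cube_le_three_pow : ∀ k : ℕ, k ^ 3 ≤ 3 ^ k
  | 0 => by norm_num
  | 1 => by norm_num
  | 2 => by norm_num
  | 3 => by norm_num
  | (n+4) => by
      have ih := cube_le_three_pow (n+3)
      have h1 : (n+4)^3 ≤ 3 * (n+3)^3 := by nlinarith [n.zero_le, sq_nonneg n, Nat.zero_le (n*n), Nat.zero_le (n*n*n)]
      calc (n+4)^3 ≤ 3 * (n+3)^3 := h1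
        _ ≤ 3 * 3^(n+3) := by omega
        _ = 3^(n+4) := by ring

lemma key_numeric (k : ℕ) : (k : ℝ) * (3:ℝ) ^ (-(k:ℝ)/3) ≤ 1 := by
  have h3 : (0:ℝ) < 3 := by norm_num
  set a := (3:ℝ) ^ ((k:ℝ)/3) with ha
  have hap : 0 < a := Real.rpow_pos_of_pos h3 _
  have hcube : ((k:ℝ))^3 ≤ a^3 := by
    have h1 : a ^ (3:ℕ) = (3:ℝ) ^ ((k:ℝ)) := by
      rw [ha, ← Real.rpow_natCast ((3:ℝ) ^ ((k:ℝ)/3)) 3, ← Real.rpow_mul (le_of_lt h3)]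
      norm_num
    have h2 := cube_le_three_pow k
    calc ((k:ℝ))^3 = ((k^3 : ℕ) : ℝ) := by push_cast; ring
      _ ≤ ((3^k : ℕ) : ℝ) := by exact_mod_cast h2
      _ = (3:ℝ) ^ ((k:ℝ)) := by rw [Real.rpow_natCast]; push_cast; ring
      _ = a ^ (3:ℕ) := h1.symm
      _ = a ^ 3 := by norm_num
  have hka : (k:ℝ) ≤ a := by
    exact le_of_pow_le_pow_left₀ (n := 3) (by norm_num) (le_of_lt hap) hcube
  have hinv : (3:ℝ) ^ (-(k:ℝ)/3) = a⁻¹ := by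
    rw [neg_div, Real.rpow_neg (le_of_lt h3)]
  calc (k:ℝ) * (3:ℝ)^(-(k:ℝ)/3) = (k:ℝ) * a⁻¹ := by rw [hinv]
    _ ≤ a * a⁻¹ := mul_le_mul_of_nonneg_right hka (inv_nonneg.2 (le_of_lt hap))
    _ = 1 := mul_inv_cancel₀ (ne_of_gt hap)

lemma rpow_third_le_one {k : ℕ} (hk : 1 ≤ k) : (3:ℝ) ^ (-(k:ℝ)/3) ≤ 1 := by
  have := key_numeric k
  have hk' : (1:ℝ) ≤ (k:ℝ) := by exact_mod_cast hk
  nlinarith [Real.rpow_nonneg (show (0:ℝ) ≤ 3 by norm_num) (-(k:ℝ)/3)]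

/-! ### Sum lemmas -/

lemma sum_union_le {β : Type} [DecidableEq β] (s t : Finset β) (f : β → ℝ)
    (hf : ∀ b, 0 ≤ f b) :
    ∑ b ∈ s ∪ t, f b ≤ ∑ b ∈ s, f b + ∑ b ∈ t, f b := by
  have h := Finset.sum_union_inter (s₁ := s) (s₂ := t) (f := f)
  have h0 : 0 ≤ ∑ b ∈ s ∩ t, f b := Finset.sum_nonneg fun b _ => hf b
  linarith

lemma sum_biUnion_le {α β : Type} [DecidableEq β] (s : Finset α) (t : α → Finset β)
    (f : β → ℝ) (hf : ∀ b, 0 ≤ f b) :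
    ∑ b ∈ s.biUnion t, f b ≤ ∑ a ∈ s, ∑ b ∈ t a, f b := by
  classical
  induction s using Finset.induction_on with
  | empty => simp
  | @insert a s ha ih =>
    rw [Finset.biUnion_insert, Finset.sum_insert ha]
    exact le_trans (sum_union_le _ _ f hf) (by linarith)

/-! ### Support lemma -/

lemma support_clause {S : CTheory} {M : Finset ℕ} {a : ℕ}
    (hmin : isMinModel M S) (ha : a ∈ M) :
    ∃ c ∈ S, ((true, a) : Lit) ∈ c ∧ ∀ l ∈ c, ¬ satLit (M.erase a) l := by
  have hss : M.erase a ⊂ M := Finset.erase_ssubset ha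
  have hnm := hmin.2.2 _ hss
  unfold isModel at hnm
  push_neg at hnm
  obtain ⟨c, hcS, hall⟩ := hnm
  obtain ⟨l₀, hl₀c, hsat⟩ := hmin.1 c hcS
  refine ⟨c, hcS, ?_, hall⟩
  obtain ⟨b, x⟩ := l₀
  cases b
  · exfalso
    apply hall _ hl₀c
    simp only [satLit] at hsat ⊢
    simp only [Finset.mem_erase]
    simp at hsat ⊢
    intro _; exact hsat
  · by_cases hx : x = a
    · subst hx; exact hl₀c
    · exfalso
      apply hall _ hl₀c
      rw [satLit_erase_iff (by simpa using hx)]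
      exact hsat

/-! ### Branching structures -/

/-- Neighbors of `x` along purely positive 2-clauses with both atoms in `R`. -/
def Ngr (S : CTheory) (R : Finset ℕ) (x : ℕ) : Finset ℕ :=
  R.filter (fun b => b ≠ x ∧ ({((true, x) : Lit), ((true, b) : Lit)} : Finset Lit) ∈ S)

lemma Ngr_spec {S : CTheory} {R : Finset ℕ} {x b : ℕ} (h : b ∈ Ngr S R x) :
    b ∈ R ∧ b ≠ x ∧ ({((true, x) : Lit), ((true, b) : Lit)} : Finset Lit) ∈ S := by
  have := Finset.mem_filter.1 h
  exact ⟨this.1, this.2.1, this.2.2⟩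

lemma Ngr_symm {S : CTheory} {R : Finset ℕ} {x b : ℕ} (hx : x ∈ R) (h : b ∈ Ngr S R x) :
    x ∈ Ngr S R b := by
  obtain ⟨hbR, hbx, hcl⟩ := Ngr_spec h
  refine Finset.mem_filter.2 ⟨hx, fun hxb => hbx hxb.symm, ?_⟩
  rwa [Finset.pair_comm]

lemma notMem_Ngr_self {S : CTheory} {R : Finset ℕ} {x : ℕ} : x ∉ Ngr S R x := by
  intro h
  exact (Ngr_spec h).2.1 rfl

def livePosIn (S : CTheory) (R : Finset ℕ) (a : ℕ) : Prop :=
  ∃ c ∈ S, ∃ l : Lit, c = {((true, a) : Lit), l} ∧ l.2 ∈ R ∧ l.2 ≠ a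

def liveNegIn (S : CTheory) (R : Finset ℕ) (a : ℕ) : Prop :=
  ∃ c ∈ S, ∃ l : Lit, c = {((false, a) : Lit), l} ∧ l.2 ∈ R ∧ l.2 ≠ a

lemma lcons_of_atoms {A : Finset Lit} (h : ∀ l ∈ A, ∀ l' ∈ A, l.2 = l'.2 → l = l') :
    lcons A := by
  intro x hx
  have := h _ hx.1 _ hx.2 rfl
  simp at this

lemma lcons_singleton (l : Lit) : lcons {l} := by
  apply lcons_of_atoms
  intro l1 h1 l2 h2 _
  rw [Finset.mem_singleton] at h1 h2
  rw [h1, h2]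

/-! ### The branching lemma -/

lemma branch_lemma (S : CTheory) (hok : ∀ c ∈ S, Clause.ok c) (h2 : ∀ c ∈ S, c.card ≤ 2)
    (R : Finset ℕ) (L : Finset Lit)
    (hRsub : R ⊆ thAtoms S) (hLcons : lcons L)
    (hdisj : ∀ x ∈ L.image Prod.snd, x ∉ R)
    (hunion : L.image Prod.snd ∪ R = thAtoms S)
    (hRne : R.Nonempty) :
    ∃ ℰ : Finset (Finset Lit), ℰ.Nonempty ∧
      (∀ E ∈ ℰ, E.Nonempty ∧ E ⊆ litsOf S ∧ (∀ x ∈ E.image Prod.snd, x ∈ R) ∧ lcons E) ∧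
      (∀ M, isMinModel M S → consistentWith M L → ∃ E ∈ ℰ, consistentWith M E) ∧
      ∑ E ∈ ℰ, MMw E ≤ 1 := by
  -- helper for single-literal branch families
  have single : ∀ l : Lit, l.2 ∈ R →
      (∀ M, isMinModel M S → consistentWith M L → satLit M l) →
      ∃ ℰ : Finset (Finset Lit), ℰ.Nonempty ∧
      (∀ E ∈ ℰ, E.Nonempty ∧ E ⊆ litsOf S ∧ (∀ x ∈ E.image Prod.snd, x ∈ R) ∧ lcons E) ∧
      (∀ M, isMinModel M S → consistentWith M L → ∃ E ∈ ℰ, consistentWith M E) ∧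
      ∑ E ∈ ℰ, MMw E ≤ 1 := by
    intro l hlR hforce
    refine ⟨{{l}}, ⟨_, Finset.mem_singleton_self _⟩, ?_, ?_, ?_⟩
    · intro E hE
      rw [Finset.mem_singleton] at hE
      subst hE
      refine ⟨⟨_, Finset.mem_singleton_self _⟩, ?_, ?_, lcons_singleton _⟩
      · intro l' hl'
        rw [Finset.mem_singleton] at hl'
        subst hl'
        exact mem_litsOf_iff.2 (hRsub hlR)
      · intro x hx
        simp only [Finset.image_singleton, Finset.mem_singleton] at hx
        subst hx
        exact hlR
    · intro M hm hc
      refine ⟨{l}, Finset.mem_singleton_self _, ?_⟩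
      rw [consistentWith_iff]
      intro l' hl'
      rw [Finset.mem_singleton] at hl'
      subst hl'
      exact hforce M hm hc
    · rw [Finset.sum_singleton]
      apply Real.rpow_le_one_of_one_le_of_nonpos (by norm_num)
      apply div_nonpos_of_nonpos_of_nonneg _ (by norm_num)
      simp
  by_cases hW1 : ∃ M, isMinModel M S ∧ consistentWith M L
  swap
  · -- no minimal model consistent with L at all
    obtain ⟨a₀, ha₀⟩ := hRne
    refine single ((true, a₀) : Lit) ha₀ ?_
    intro M hm hc
    exact absurd ⟨M, hm, hc⟩ hW1
  by_cases hW2 : ∃ b ∈ R, (∀ M, isMinModel M S → consistentWith M L → b ∈ M) ∨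
      (∀ M, isMinModel M S → consistentWith M L → b ∉ M)
  · -- some undecided atom is forced
    obtain ⟨b, hbR, hb⟩ := hW2
    rcases hb with hb | hb
    · exact single ((true, b) : Lit) hbR (fun M hm hc => by
        simpa [satLit] using hb M hm hc)
    · exact single ((false, b) : Lit) hbR (fun M hm hc => by
        simpa [satLit] using hb M hm hc)
  push_neg at hW2
  -- every undecided atom is bivalent
  have hbiv : ∀ b ∈ R, (∃ M, isMinModel M S ∧ consistentWith M L ∧ b ∉ M) ∧
      (∃ M, isMinModel M S ∧ consistentWith M L ∧ b ∈ M) := by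
    intro b hbR
    obtain ⟨h1, h2⟩ := hW2 b hbR
    constructor
    · obtain ⟨M, hM, hc, hb⟩ := h1
      exact ⟨M, hM, hc, hb⟩
    · obtain ⟨M, hM, hc, hb⟩ := h2
      exact ⟨M, hM, hc, hb⟩
  -- classification of clauses: satisfied by L, or "live" binary with both atoms in R
  have hclass : ∀ c ∈ S, (∃ l ∈ c, l ∈ L) ∨
      (∃ l₁ l₂ : Lit, c = {l₁, l₂} ∧ l₁.2 ∈ R ∧ l₂.2 ∈ R ∧ l₁.2 ≠ l₂.2) := by
    intro c hc
    by_cases hLsat : ∃ l ∈ c, l ∈ L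
    · exact Or.inl hLsat
    right
    push_neg at hLsat
    have hfalse : ∀ l ∈ c, l.2 ∉ R → litNeg l ∈ L := by
      intro l hl hnR
      have hat : l.2 ∈ thAtoms S := mem_thAtoms_of_mem hl hc
      rw [← hunion] at hat
      rcases Finset.mem_union.1 hat with h | h
      · obtain ⟨b, x⟩ := l
        rcases mem_atoms_assigned h with hT | hF
        · cases b
          · simpa [litNeg] using hT
          · exact absurd hT (hLsat _ hl)
        · cases b
          · exact absurd hF (hLsat _ hl)
          · simpa [litNeg] using hF
      · exact absurd h hnR
    set U := c.filter (fun l : Lit => l.2 ∈ R) with hU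
    have hUsub : U ⊆ c := Finset.filter_subset _ _
    have hUcard : U.card ≤ 2 := le_trans (Finset.card_le_card hUsub) (h2 c hc)
    have hviaU : ∀ M, isModel M S → consistentWith M L → ∃ l ∈ U, satLit M l := by
      intro M hmod hcons
      obtain ⟨l, hlc, hsat⟩ := hmod c hc
      by_cases hr : l.2 ∈ R
      · exact ⟨l, Finset.mem_filter.2 ⟨hlc, hr⟩, hsat⟩
      · exact absurd (consistentWith_iff.1 hcons _ (hfalse l hlc hr))
          (fun h => satLit_litNeg_false hsat h)
    by_cases h0 : U.card = 0
    · exfalso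
      obtain ⟨M₀, hM₀, hM₀L⟩ := hW1
      obtain ⟨l, hlU, _⟩ := hviaU M₀ hM₀.1 hM₀L
      rw [Finset.card_eq_zero.1 h0] at hlU
      simp at hlU
    by_cases h1 : U.card = 1
    · exfalso
      obtain ⟨u, hu⟩ := Finset.card_eq_one.1 h1
      have hforced : ∀ M, isMinModel M S → consistentWith M L → satLit M u := by
        intro M hm hc'
        obtain ⟨l, hlU, hsat⟩ := hviaU M hm.1 hc'
        rw [hu, Finset.mem_singleton] at hlU
        exact hlU ▸ hsat
      have huU : u ∈ U := by rw [hu]; exact Finset.mem_singleton_self u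
      have huR : u.2 ∈ R := (Finset.mem_filter.1 huU).2
      obtain ⟨b, x⟩ := u
      obtain ⟨⟨M₁, hM₁, hc₁, hx₁⟩, ⟨M₂, hM₂, hc₂, hx₂⟩⟩ := hbiv x huR
      cases b
      · have := hforced M₂ hM₂ hc₂
        simp [satLit] at this
        exact this hx₂
      · have := hforced M₁ hM₁ hc₁
        simp [satLit] at this
        exact hx₁ this
    have hU2 : U.card = 2 := by omega
    obtain ⟨l₁, l₂, hne12, hUeq⟩ := Finset.card_eq_two.1 hU2
    have hcU : U = c := Finset.eq_of_subset_of_card_le hUsub (by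
      have := h2 c hc; omega)
    have hl₁U : l₁ ∈ U := by rw [hUeq]; exact Finset.mem_insert_self _ _
    have hl₂U : l₂ ∈ U := by rw [hUeq]; exact Finset.mem_insert.2 (Or.inr (Finset.mem_singleton_self _))
    refine ⟨l₁, l₂, by rw [← hcU, hUeq], (Finset.mem_filter.1 hl₁U).2,
      (Finset.mem_filter.1 hl₂U).2, ?_⟩
    intro hxx
    obtain ⟨b₁, x₁⟩ := l₁
    obtain ⟨b₂, x₂⟩ := l₂
    simp only at hxx
    subst hxx
    have hl₁c : (b₁, x₁) ∈ c := hUsub hl₁U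
    have hl₂c : (b₂, x₁) ∈ c := hUsub hl₂U
    cases b₁ <;> cases b₂
    · exact hne12 rfl
    · exact hok c hc x₁ ⟨hl₂c, hl₁c⟩
    · exact hok c hc x₁ ⟨hl₁c, hl₂c⟩
    · exact hne12 rfl
  by_cases hW3 : ∃ a ∈ R, livePosIn S R a ∧ liveNegIn S R a
  · -- an atom occurring both positively and negatively in live clauses
    obtain ⟨a, haR, ⟨c₁, hc₁S, l₁, hc₁, hl₁R, hl₁a⟩, ⟨c₂, hc₂S, l₂, hc₂, hl₂R, hl₂a⟩⟩ := hW3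
    set E₁ : Finset Lit := {((true, a) : Lit), l₂} with hE₁
    set E₂ : Finset Lit := {((false, a) : Lit), l₁} with hE₂
    have hTa1 : ((true, a) : Lit) ∈ E₁ := Finset.mem_insert_self _ _
    have hl₂1 : l₂ ∈ E₁ := Finset.mem_insert.2 (Or.inr (Finset.mem_singleton_self _))
    have hFa2 : ((false, a) : Lit) ∈ E₂ := Finset.mem_insert_self _ _
    have hl₁2 : l₁ ∈ E₂ := Finset.mem_insert.2 (Or.inr (Finset.mem_singleton_self _))
    have hE₁₂ : E₁ ≠ E₂ := by
      intro h
      have hmem : ((true, a) : Lit) ∈ E₂ := h ▸ hTa1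
      rcases Finset.mem_insert.1 hmem with h' | h'
      · simp at h'
      · rw [Finset.mem_singleton] at h'
        exact hl₁a (by rw [← h'])
    have hmemE₁ : ∀ l ∈ E₁, l = ((true, a) : Lit) ∨ l = l₂ := by
      intro l hl
      rcases Finset.mem_insert.1 hl with h | h
      · exact Or.inl h
      · exact Or.inr (Finset.mem_singleton.1 h)
    have hmemE₂ : ∀ l ∈ E₂, l = ((false, a) : Lit) ∨ l = l₁ := by
      intro l hl
      rcases Finset.mem_insert.1 hl with h | h
      · exact Or.inl h
      · exact Or.inr (Finset.mem_singleton.1 h)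
    refine ⟨{E₁, E₂}, ⟨E₁, Finset.mem_insert_self _ _⟩, ?_, ?_, ?_⟩
    · intro E hE
      have hcases : E = E₁ ∨ E = E₂ := by
        rcases Finset.mem_insert.1 hE with h | h
        · exact Or.inl h
        · exact Or.inr (Finset.mem_singleton.1 h)
      rcases hcases with rfl | rfl
      · refine ⟨⟨_, hTa1⟩, ?_, ?_, ?_⟩
        · intro l hl
          rcases hmemE₁ l hl with rfl | rfl
          · exact mem_litsOf_iff.2 (hRsub haR)
          · exact mem_litsOf_iff.2 (hRsub hl₂R)
        · intro x hx
          obtain ⟨l, hl, rfl⟩ := Finset.mem_image.1 hx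
          rcases hmemE₁ l hl with rfl | rfl
          · exact haR
          · exact hl₂R
        · apply lcons_of_atoms
          intro l hl l' hl' hEq
          rcases hmemE₁ l hl with rfl | rfl <;> rcases hmemE₁ l' hl' with rfl | rfl
          · rfl
          · exact absurd hEq.symm hl₂a
          · exact absurd hEq hl₂a
          · rfl
      · refine ⟨⟨_, hFa2⟩, ?_, ?_, ?_⟩
        · intro l hl
          rcases hmemE₂ l hl with rfl | rfl
          · exact mem_litsOf_iff.2 (hRsub haR)
          · exact mem_litsOf_iff.2 (hRsub hl₁R)
        · intro x hx
          obtain ⟨l, hl, rfl⟩ := Finset.mem_image.1 hx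
          rcases hmemE₂ l hl with rfl | rfl
          · exact haR
          · exact hl₁R
        · apply lcons_of_atoms
          intro l hl l' hl' hEq
          rcases hmemE₂ l hl with rfl | rfl <;> rcases hmemE₂ l' hl' with rfl | rfl
          · rfl
          · exact absurd hEq.symm hl₁a
          · exact absurd hEq hl₁a
          · rfl
    · intro M hm hcons
      by_cases haM : a ∈ M
      · refine ⟨E₁, Finset.mem_insert_self _ _, ?_⟩
        rw [consistentWith_iff]
        intro l hl
        rcases hmemE₁ l hl with rfl | rfl
        · simpa [satLit] using haM
        · obtain ⟨l', hl'c, hsat⟩ := hm.1 c₂ hc₂S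
          rw [hc₂] at hl'c
          rcases Finset.mem_insert.1 hl'c with h' | h'
          · subst h'
            simp [satLit] at hsat
            exact absurd haM hsat
          · rw [Finset.mem_singleton] at h'
            exact h' ▸ hsat
      · refine ⟨E₂, Finset.mem_insert.2 (Or.inr (Finset.mem_singleton_self _)), ?_⟩
        rw [consistentWith_iff]
        intro l hl
        rcases hmemE₂ l hl with rfl | rfl
        · simpa [satLit] using haM
        · obtain ⟨l', hl'c, hsat⟩ := hm.1 c₁ hc₁S
          rw [hc₁] at hl'c
          rcases Finset.mem_insert.1 hl'c with h' | h'
          · subst h'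
            simp [satLit] at hsat
            exact absurd hsat haM
          · rw [Finset.mem_singleton] at h'
            exact h' ▸ hsat
    · rw [Finset.sum_pair hE₁₂]
      have hcard₁ : (E₁.image Prod.snd).card = 2 := by
        rw [hE₁, Finset.image_insert, Finset.image_singleton]
        rw [Finset.card_insert_of_notMem (by
          rw [Finset.mem_singleton]; exact fun h => hl₂a h.symm)]
        simp
      have hcard₂ : (E₂.image Prod.snd).card = 2 := by
        rw [hE₂, Finset.image_insert, Finset.image_singleton]
        rw [Finset.card_insert_of_notMem (by
          rw [Finset.mem_singleton]; exact fun h => hl₁a h.symm)]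
        simp
      have h₁ : MMw E₁ = (3:ℝ) ^ (-(2:ℝ)/3) := by
        rw [MMw, hcard₁]; norm_num
      have h₂ : MMw E₂ = (3:ℝ) ^ (-(2:ℝ)/3) := by
        rw [MMw, hcard₂]; norm_num
      rw [h₁, h₂]
      have := key_numeric 2
      norm_num at this
      linarith
  -- W4: every atom is pure in the live clauses
  push_neg at hW3
  -- no atom of R occurs negatively in a live clause
  have hnoneg : ∀ b ∈ R, ¬ liveNegIn S R b := by
    intro b hbR hlneg
    obtain ⟨_, ⟨M, hM, hcM, hbM⟩⟩ := hbiv b hbR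
    apply hM.2.2 (M.erase b) (Finset.erase_ssubset hbM)
    intro c hc
    rcases hclass c hc with ⟨l, hlc, hlL⟩ | ⟨l₁, l₂, hcc, h1R, h2R, hneq⟩
    · refine ⟨l, hlc, ?_⟩
      have hsat : satLit M l := consistentWith_iff.1 hcM l hlL
      have hlb : l.2 ≠ b := fun h => hdisj l.2 (Finset.mem_image_of_mem _ hlL) (h ▸ hbR)
      exact (satLit_erase_iff hlb).2 hsat
    · obtain ⟨l, hlc, hsat⟩ := hM.1 c hc
      by_cases hlb : l.2 = b
      · obtain ⟨bb, x⟩ := l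
        simp only at hlb
        subst hlb
        cases bb
        · exact ⟨(false, x), hlc, by simp [satLit]⟩
        · exfalso
          have hmem : ((true, x) : Lit) ∈ ({l₁, l₂} : Finset Lit) := hcc ▸ hlc
          apply hW3 x hbR ?_ hlneg
          rcases Finset.mem_insert.1 hmem with h | h
          · refine ⟨c, hc, l₂, by rw [hcc, ← h], h2R, ?_⟩
            rw [← h] at hneq
            exact fun hh => hneq hh.symm
          · rw [Finset.mem_singleton] at h
            refine ⟨c, hc, l₁, by rw [hcc, ← h, Finset.pair_comm], h1R, ?_⟩
            rw [← h] at hneq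
            exact fun hh => hneq hh
      · exact ⟨l, hlc, (satLit_erase_iff hlb).2 hsat⟩
  -- every atom of a minimal model has a positive "support" neighbor outside the model
  have hposN : ∀ a ∈ R, ∀ M, isMinModel M S → consistentWith M L → a ∈ M →
      ∃ b ∈ Ngr S R a, b ∉ M := by
    intro a haR M hm hcons haM
    obtain ⟨c, hcS, hac, hall⟩ := support_clause hm haM
    rcases hclass c hcS with ⟨l, hlc, hlL⟩ | ⟨l₁, l₂, hcc, h1R, h2R, hneq⟩
    · exfalso
      have hsat : satLit M l := consistentWith_iff.1 hcons l hlL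
      have hla : l.2 ≠ a := fun h => hdisj l.2 (Finset.mem_image_of_mem _ hlL) (h ▸ haR)
      exact hall l hlc ((satLit_erase_iff hla).2 hsat)
    · have hmem : ((true, a) : Lit) ∈ ({l₁, l₂} : Finset Lit) := hcc ▸ hac
      obtain ⟨l', hc', hl'R, hl'a⟩ :
          ∃ l' : Lit, c = {((true, a) : Lit), l'} ∧ l'.2 ∈ R ∧ l'.2 ≠ a := by
        rcases Finset.mem_insert.1 hmem with h | h
        · refine ⟨l₂, by rw [hcc, ← h], h2R, ?_⟩
          rw [← h] at hneq
          exact fun hh => hneq hh.symm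
        · rw [Finset.mem_singleton] at h
          refine ⟨l₁, by rw [hcc, ← h, Finset.pair_comm], h1R, ?_⟩
          rw [← h] at hneq
          exact fun hh => hneq hh
      have hl'mem : l' ∈ c := by
        rw [hc']
        exact Finset.mem_insert.2 (Or.inr (Finset.mem_singleton_self _))
      have hnsat : ¬ satLit M l' := fun h => hall l' hl'mem ((satLit_erase_iff hl'a).2 h)
      obtain ⟨b', x⟩ := l'
      simp only at hl'R hl'a
      cases b'
      · exfalso
        apply hnoneg x hl'R
        exact ⟨c, hcS, ((true, a) : Lit), by rw [hc', Finset.pair_comm], haR,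
          fun hh => hl'a hh.symm⟩
      · refine ⟨x, ?_, ?_⟩
        · refine Finset.mem_filter.2 ⟨hl'R, hl'a, ?_⟩
          rw [← hc']
          exact hcS
        · simpa [satLit] using hnsat
  -- pick the pivot of minimum positive degree
  have hNne : ∀ a ∈ R, (Ngr S R a).Nonempty := by
    intro a haR
    obtain ⟨_, ⟨M, hM, hcM, haM⟩⟩ := hbiv a haR
    obtain ⟨b, hb, _⟩ := hposN a haR M hM hcM haM
    exact ⟨b, hb⟩
  obtain ⟨a, haR, hamin⟩ := Finset.exists_min_image R (fun b => (Ngr S R b).card) hRne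
  set d := (Ngr S R a).card with hd
  have hd1 : 0 < d := Finset.card_pos.2 (hNne a haR)
  set E₀ : Finset Lit :=
    insert ((false, a) : Lit) ((Ngr S R a).image (fun b => ((true, b) : Lit))) with hE₀
  set Eb : ℕ → Finset Lit := fun b => insert ((true, a) : Lit) (insert ((false, b) : Lit)
      (((Ngr S R b).erase a).image (fun w => ((true, w) : Lit)))) with hEb
  have hmemE₀ : ∀ l ∈ E₀, l = ((false, a) : Lit) ∨ ∃ b ∈ Ngr S R a, l = ((true, b) : Lit) := by
    intro l hl
    rcases Finset.mem_insert.1 hl with h | h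
    · exact Or.inl h
    · obtain ⟨b, hb, rfl⟩ := Finset.mem_image.1 h
      exact Or.inr ⟨b, hb, rfl⟩
  have hmemEb : ∀ b, ∀ l ∈ Eb b, l = ((true, a) : Lit) ∨ l = ((false, b) : Lit) ∨
      ∃ w ∈ (Ngr S R b).erase a, l = ((true, w) : Lit) := by
    intro b l hl
    rcases Finset.mem_insert.1 hl with h | h
    · exact Or.inl h
    rcases Finset.mem_insert.1 h with h' | h'
    · exact Or.inr (Or.inl h')
    · obtain ⟨w, hw, rfl⟩ := Finset.mem_image.1 h'
      exact Or.inr (Or.inr ⟨w, hw, rfl⟩)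
  have hcompid : (Prod.snd ∘ fun b : ℕ => ((true, b) : Lit)) = id := rfl
  have hatE₀ : E₀.image Prod.snd = insert a (Ngr S R a) := by
    rw [hE₀, Finset.image_insert, Finset.image_image, hcompid, Finset.image_id]
  have hatEb : ∀ b, (Eb b).image Prod.snd = insert a (insert b ((Ngr S R b).erase a)) := by
    intro b
    show (insert ((true, a) : Lit) (insert ((false, b) : Lit)
      (((Ngr S R b).erase a).image (fun w => ((true, w) : Lit))))).image Prod.snd = _
    rw [Finset.image_insert, Finset.image_insert, Finset.image_image, hcompid, Finset.image_id]
  have hcardE₀ : (E₀.image Prod.snd).card = d + 1 := by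
    rw [hatE₀, Finset.card_insert_of_notMem notMem_Ngr_self]
  have hcardEb : ∀ b ∈ Ngr S R a, ((Eb b).image Prod.snd).card = (Ngr S R b).card + 1 := by
    intro b hbN
    obtain ⟨hbR, hba, hclause⟩ := Ngr_spec hbN
    have haNb : a ∈ Ngr S R b := Ngr_symm haR hbN
    have hpos : 0 < (Ngr S R b).card := Finset.card_pos.2 ⟨a, haNb⟩
    rw [hatEb b, Finset.card_insert_of_notMem (by
        intro h
        rcases Finset.mem_insert.1 h with h' | h'
        · exact hba h'.symm
        · exact absurd rfl (Finset.mem_erase.1 h').1),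
      Finset.card_insert_of_notMem (fun h => notMem_Ngr_self (Finset.mem_erase.1 h).2),
      Finset.card_erase_of_mem haNb]
    omega
  have hE₀Eb : ∀ b ∈ Ngr S R a, E₀ ≠ Eb b := by
    intro b hbN h
    have hmem : ((true, a) : Lit) ∈ E₀ := by
      rw [h]
      exact Finset.mem_insert_self _ _
    rcases hmemE₀ _ hmem with h' | ⟨b', hb', h'⟩
    · simp at h'
    · have h2 : a = b' := congrArg Prod.snd h'
      subst h2
      exact notMem_Ngr_self hb'
  have hEbinj : ∀ b₁ ∈ Ngr S R a, ∀ b₂ ∈ Ngr S R a, Eb b₁ = Eb b₂ → b₁ = b₂ := by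
    intro b₁ h₁ b₂ h₂ h
    have hmem : ((false, b₁) : Lit) ∈ Eb b₂ := by
      rw [← h]
      exact Finset.mem_insert.2 (Or.inr (Finset.mem_insert_self _ _))
    rcases hmemEb b₂ _ hmem with h' | h' | ⟨w, hw, h'⟩
    · simp at h'
    · exact congrArg Prod.snd h'
    · simp at h'
  refine ⟨insert E₀ ((Ngr S R a).image Eb), ⟨E₀, Finset.mem_insert_self _ _⟩, ?_, ?_, ?_⟩
  · intro E hE
    rcases Finset.mem_insert.1 hE with rfl | hE'
    · refine ⟨⟨_, Finset.mem_insert_self _ _⟩, ?_, ?_, ?_⟩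
      · intro l hl
        rcases hmemE₀ l hl with rfl | ⟨b, hbN, rfl⟩
        · exact mem_litsOf_iff.2 (hRsub haR)
        · exact mem_litsOf_iff.2 (hRsub (Ngr_spec hbN).1)
      · intro x hx
        rw [hatE₀] at hx
        rcases Finset.mem_insert.1 hx with rfl | hx'
        · exact haR
        · exact (Ngr_spec hx').1
      · intro x hx
        obtain ⟨hT, hF⟩ := hx
        rcases hmemE₀ _ hF with h' | ⟨b, hbN, h'⟩
        swap
        · simp at h'
        have hxa : x = a := congrArg Prod.snd h'
        subst hxa
        rcases hmemE₀ _ hT with h'' | ⟨b, hbN, h''⟩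
        · simp at h''
        · have hxb : x = b := congrArg Prod.snd h''
          subst hxb
          exact notMem_Ngr_self hbN
    · obtain ⟨b, hbN, rfl⟩ := Finset.mem_image.1 hE'
      obtain ⟨hbR, hba, hclause⟩ := Ngr_spec hbN
      refine ⟨⟨_, Finset.mem_insert_self _ _⟩, ?_, ?_, ?_⟩
      · intro l hl
        rcases hmemEb b l hl with rfl | rfl | ⟨w, hw, rfl⟩
        · exact mem_litsOf_iff.2 (hRsub haR)
        · exact mem_litsOf_iff.2 (hRsub hbR)
        · exact mem_litsOf_iff.2 (hRsub (Ngr_spec (Finset.mem_erase.1 hw).2).1)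
      · intro x hx
        rw [hatEb b] at hx
        rcases Finset.mem_insert.1 hx with rfl | hx'
        · exact haR
        rcases Finset.mem_insert.1 hx' with rfl | hx''
        · exact hbR
        · exact (Ngr_spec (Finset.mem_erase.1 hx'').2).1
      · intro x hx
        obtain ⟨hT, hF⟩ := hx
        rcases hmemEb b _ hF with h' | h' | ⟨w, hw, h'⟩
        · simp at h'
        swap
        · simp at h'
        have hxb : x = b := congrArg Prod.snd h'
        rw [hxb] at hT
        rcases hmemEb b _ hT with h'' | h'' | ⟨w, hw, h''⟩
        · exact hba (congrArg Prod.snd h'')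
        · simp at h''
        · have hbw : b = w := congrArg Prod.snd h''
          rw [← hbw] at hw
          exact notMem_Ngr_self (Finset.mem_erase.1 hw).2
  · intro M hm hcons
    by_cases haM : a ∈ M
    · obtain ⟨b, hbN, hbM⟩ := hposN a haR M hm hcons haM
      refine ⟨Eb b, Finset.mem_insert.2 (Or.inr (Finset.mem_image_of_mem _ hbN)), ?_⟩
      rw [consistentWith_iff]
      intro l hl
      rcases hmemEb b l hl with rfl | rfl | ⟨w, hw, rfl⟩
      · simpa [satLit] using haM
      · simpa [satLit] using hbM
      · have hwN : w ∈ Ngr S R b := (Finset.mem_erase.1 hw).2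
        obtain ⟨hwR, hwb, hclw⟩ := Ngr_spec hwN
        obtain ⟨l', hl'c, hsat⟩ := hm.1 _ hclw
        rcases Finset.mem_insert.1 hl'c with h' | h'
        · exfalso
          rw [h'] at hsat
          simp [satLit] at hsat
          exact hbM hsat
        · rw [Finset.mem_singleton] at h'
          rw [h'] at hsat
          exact hsat
    · refine ⟨E₀, Finset.mem_insert_self _ _, ?_⟩
      rw [consistentWith_iff]
      intro l hl
      rcases hmemE₀ l hl with rfl | ⟨b, hbN, rfl⟩
      · simpa [satLit] using haM
      · obtain ⟨hbR, hba, hclb⟩ := Ngr_spec hbN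
        obtain ⟨l', hl'c, hsat⟩ := hm.1 _ hclb
        rcases Finset.mem_insert.1 hl'c with h' | h'
        · exfalso
          rw [h'] at hsat
          simp [satLit] at hsat
          exact haM hsat
        · rw [Finset.mem_singleton] at h'
          rw [h'] at hsat
          exact hsat
  · rw [Finset.sum_insert (by
      intro h
      obtain ⟨b, hbN, hEq⟩ := Finset.mem_image.1 h
      exact hE₀Eb b hbN hEq.symm)]
    rw [Finset.sum_image (fun x hx y hy h => hEbinj x hx y hy h)]
    set B := (3:ℝ) ^ (-((d + 1 : ℕ) : ℝ)/3) with hB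
    have hwE₀ : MMw E₀ ≤ B := MMw_le (by rw [hcardE₀])
    have hwEb : ∀ b ∈ Ngr S R a, MMw (Eb b) ≤ B := by
      intro b hbN
      apply MMw_le
      rw [hcardEb b hbN]
      have := hamin b (Ngr_spec hbN).1
      omega
    have hsum : ∑ b ∈ Ngr S R a, MMw (Eb b) ≤ (d : ℝ) * B := by
      calc ∑ b ∈ Ngr S R a, MMw (Eb b) ≤ ∑ _b ∈ Ngr S R a, B :=
            Finset.sum_le_sum (fun b hb => hwEb b hb)
        _ = (d : ℝ) * B := by
            rw [Finset.sum_const, ← hd, nsmul_eq_mul]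
    have hkey : ((d + 1 : ℕ) : ℝ) * B ≤ 1 := key_numeric (d + 1)
    have : MMw E₀ + ∑ b ∈ Ngr S R a, MMw (Eb b) ≤ ((d + 1 : ℕ) : ℝ) * B := by
      push_cast
      push_cast at hsum
      linarith
    linarith

lemma MMw_union_eq {L E : Finset Lit}
    (hdisj : Disjoint (L.image Prod.snd) (E.image Prod.snd)) :
    MMw (L ∪ E) = MMw L * MMw E := by
  rw [MMw, MMw, MMw, Finset.image_union, Finset.card_union_of_disjoint hdisj,
    ← Real.rpow_add (by norm_num : (0:ℝ) < 3)]
  congr 1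
  push_cast
  ring

lemma cover_rec (S : CTheory) (hok : ∀ c ∈ S, Clause.ok c) (h2 : ∀ c ∈ S, c.card ≤ 2) :
    ∀ n : ℕ, ∀ R : Finset ℕ, ∀ L : Finset Lit, R.card ≤ n → R ⊆ thAtoms S →
      L ⊆ litsOf S → lcons L → (∀ x ∈ L.image Prod.snd, x ∉ R) →
      (L.image Prod.snd ∪ R = thAtoms S) → (L.Nonempty ∨ R.Nonempty) →
      ∃ 𝒜 : Finset (Finset Lit), 𝒜.Nonempty ∧
        (∀ A ∈ 𝒜, L ⊆ A ∧ A ⊆ litsOf S ∧ A.Nonempty ∧ lcons A) ∧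
        (∀ M, isMinModel M S → consistentWith M L → ∃ A ∈ 𝒜, consistentWith M A) ∧
        ∑ A ∈ 𝒜, MMw A ≤ MMw L := by
  have base : ∀ L : Finset Lit, L ⊆ litsOf S → lcons L → L.Nonempty →
      ∃ 𝒜 : Finset (Finset Lit), 𝒜.Nonempty ∧
        (∀ A ∈ 𝒜, L ⊆ A ∧ A ⊆ litsOf S ∧ A.Nonempty ∧ lcons A) ∧
        (∀ M, isMinModel M S → consistentWith M L → ∃ A ∈ 𝒜, consistentWith M A) ∧
        ∑ A ∈ 𝒜, MMw A ≤ MMw L := by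
    intro L hLsub hLcons hLne
    refine ⟨{L}, ⟨L, Finset.mem_singleton_self _⟩, ?_, ?_, ?_⟩
    · intro A hA
      rw [Finset.mem_singleton] at hA
      subst hA
      exact ⟨subset_rfl, hLsub, hLne, hLcons⟩
    · intro M _ hc
      exact ⟨L, Finset.mem_singleton_self _, hc⟩
    · rw [Finset.sum_singleton]
  intro n
  induction n with
  | zero =>
    intro R L hcard hRsub hLsub hLcons hdisj hunion hne
    have hR : R = ∅ := Finset.card_eq_zero.1 (le_antisymm hcard (Nat.zero_le _))
    subst hR
    rcases hne with hLne | hRne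
    · exact base L hLsub hLcons hLne
    · exact absurd hRne (by simp)
  | succ n ih =>
    intro R L hcard hRsub hLsub hLcons hdisj hunion hne
    rcases Finset.eq_empty_or_nonempty R with hR | hRne
    · subst hR
      rcases hne with hLne | hRne
      · exact base L hLsub hLcons hLne
      · exact absurd hRne (by simp)
    obtain ⟨ℰ, hℰne, hℰmem, hℰcov, hℰsum⟩ :=
      branch_lemma S hok h2 R L hRsub hLcons hdisj hunion hRne
    have hrecall : ∀ E, E ∈ ℰ →
        ∃ 𝒜 : Finset (Finset Lit), 𝒜.Nonempty ∧
          (∀ A ∈ 𝒜, (L ∪ E) ⊆ A ∧ A ⊆ litsOf S ∧ A.Nonempty ∧ lcons A) ∧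
          (∀ M, isMinModel M S → consistentWith M (L ∪ E) → ∃ A ∈ 𝒜, consistentWith M A) ∧
          ∑ A ∈ 𝒜, MMw A ≤ MMw (L ∪ E) := by
      intro E hE
      obtain ⟨hEne, hEsub, hEatoms, hEcons⟩ := hℰmem E hE
      have hXsub : E.image Prod.snd ⊆ R := fun x hx => hEatoms x hx
      have hXne : (E.image Prod.snd).Nonempty := hEne.image _
      apply ih (R \ E.image Prod.snd) (L ∪ E)
      · have h1 : (R \ E.image Prod.snd).card = R.card - (E.image Prod.snd).card :=
          Finset.card_sdiff_of_subset hXsub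
        have h2' : 1 ≤ (E.image Prod.snd).card := Finset.card_pos.2 hXne
        omega
      · exact fun x hx => hRsub (Finset.mem_sdiff.1 hx).1
      · exact Finset.union_subset hLsub hEsub
      · exact lcons_union hLcons hEcons
          (fun x hx hx' => hdisj x hx' (hEatoms x hx))
      · intro x hx
        rw [Finset.image_union, Finset.mem_union] at hx
        rcases hx with hx | hx
        · exact fun h => hdisj x hx (Finset.mem_sdiff.1 h).1
        · exact fun h => (Finset.mem_sdiff.1 h).2 hx
      · rw [Finset.image_union, Finset.union_assoc, Finset.union_sdiff_of_subset hXsub]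
        exact hunion
      · left
        obtain ⟨e, he⟩ := hEne
        exact ⟨e, Finset.mem_union_right _ he⟩
    choose 𝒜f h𝒜f using hrecall
    refine ⟨ℰ.attach.biUnion (fun e => 𝒜f e.1 e.2), ?_, ?_, ?_, ?_⟩
    · obtain ⟨E₀, hE₀⟩ := hℰne
      obtain ⟨A, hA⟩ := (h𝒜f E₀ hE₀).1
      exact ⟨A, Finset.mem_biUnion.2 ⟨⟨E₀, hE₀⟩, Finset.mem_attach _ _, hA⟩⟩
    · intro A hA
      obtain ⟨⟨E, hE⟩, _, hAmem⟩ := Finset.mem_biUnion.1 hA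
      obtain ⟨hsub, hlit, hane, hacons⟩ := (h𝒜f E hE).2.1 A hAmem
      exact ⟨le_trans Finset.subset_union_left hsub, hlit, hane, hacons⟩
    · intro M hm hcons
      obtain ⟨E, hE, hcE⟩ := hℰcov M hm hcons
      obtain ⟨A, hA, hcA⟩ := (h𝒜f E hE).2.2.1 M hm (consistentWith_union.2 ⟨hcons, hcE⟩)
      exact ⟨A, Finset.mem_biUnion.2 ⟨⟨E, hE⟩, Finset.mem_attach _ _, hA⟩, hcA⟩
    · have hMdisj : ∀ E ∈ ℰ, Disjoint (L.image Prod.snd) (E.image Prod.snd) := by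
        intro E hE
        obtain ⟨_, _, hEatoms, _⟩ := hℰmem E hE
        rw [Finset.disjoint_left]
        exact fun x hx hx' => hdisj x hx (hEatoms x hx')
      calc ∑ A ∈ ℰ.attach.biUnion (fun e => 𝒜f e.1 e.2), MMw A
          ≤ ∑ e ∈ ℰ.attach, ∑ A ∈ 𝒜f e.1 e.2, MMw A :=
            sum_biUnion_le _ _ _ MMw_nonneg
        _ ≤ ∑ e ∈ ℰ.attach, MMw (L ∪ e.1) :=
            Finset.sum_le_sum (fun e _ => (h𝒜f e.1 e.2).2.2.2)
        _ = ∑ E ∈ ℰ, MMw (L ∪ E) := Finset.sum_attach ℰ (fun E => MMw (L ∪ E))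
        _ = ∑ E ∈ ℰ, MMw L * MMw E :=
            Finset.sum_congr rfl (fun E hE => MMw_union_eq (hMdisj E hE))
        _ = MMw L * ∑ E ∈ ℰ, MMw E := by rw [Finset.mul_sum]
        _ ≤ MMw L * 1 := mul_le_mul_of_nonneg_left hℰsum (MMw_nonneg L)
        _ = MMw L := mul_one _

/-- For every 2-CNF theory `S` with `At(S) ≠ ∅` there is a cover `𝒜` for `S` (a nonempty family
of nonempty consistent sets of literals over `At(S)` such that every minimal model of `S` is
consistent with some member) with `∑_{A ∈ 𝒜} 3^(−|At(A)|/3) ≤ 1`. -/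
theorem two_cnf_cover (S : CTheory) (hok : ∀ c ∈ S, Clause.ok c)
    (h2 : ∀ c ∈ S, c.card ≤ 2) (hne : (thAtoms S).Nonempty) :
    ∃ 𝒜 : Finset (Finset Lit),
      𝒜.Nonempty ∧ (∅ : Finset Lit) ∉ 𝒜 ∧
      (∀ A ∈ 𝒜, A ⊆ litsOf S ∧ A.Nonempty ∧ Disjoint (posAtoms A) (negAtoms A)) ∧
      (∀ M : Finset ℕ, isMinModel M S → ∃ A ∈ 𝒜, consistentWith M A) ∧
      ∑ A ∈ 𝒜, (3 : ℝ) ^ (-(((A.image Prod.snd).card : ℝ)) / 3) ≤ 1 := by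
  obtain ⟨𝒜, h𝒜ne, h𝒜mem, h𝒜cov, h𝒜sum⟩ :=
    cover_rec S hok h2 (thAtoms S).card (thAtoms S) ∅ le_rfl subset_rfl
      (Finset.empty_subset _) (fun a h => absurd h.1 (Finset.notMem_empty _))
      (by simp) (by simp) (Or.inr hne)
  have hempty : consistentWith ∅ (∅ : Finset Lit) → True := fun _ => trivial
  refine ⟨𝒜, h𝒜ne, ?_, ?_, ?_, ?_⟩
  · intro h
    exact Finset.not_nonempty_empty ((h𝒜mem ∅ h).2.2.1)
  · intro A hA
    obtain ⟨_, hlit, hane, hacons⟩ := h𝒜mem A hA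
    exact ⟨hlit, hane, lcons_disjoint hacons⟩
  · intro M hM
    apply h𝒜cov M hM
    constructor
    · simp [posAtoms]
    · simp [negAtoms]
  · have h1 : MMw (∅ : Finset Lit) = 1 := by
      rw [MMw]
      norm_num
    calc ∑ A ∈ 𝒜, (3 : ℝ) ^ (-(((A.image Prod.snd).card : ℝ)) / 3)
        = ∑ A ∈ 𝒜, MMw A := by rfl
      _ ≤ MMw (∅ : Finset Lit) := h𝒜sum
      _ = 1 := h1
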